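/- For every z > 0 and every x ∈ [0,∞), the measure ϑ_e^z assigns zero mass to the vertical line {x} × ℝ, i.e., ϑ_e^z({x} × ℝ) = 0. -/
import Mathlib


open MeasureTheory Set Filter Topology

noncomputable section

/-- The right half-plane `ℍ₊ = [0,∞) × ℝ`, as a subset of `ℝ × ℝ`. -/
def Hplus : Set (ℝ × ℝ) := {p | 0 ≤ p.1}

/-- Translation of a set: `B + w = {b + w : b ∈ B}`. -/
def shiftSet (B : Set (ℝ × ℝ)) (w : ℝ × ℝ) : Set (ℝ × ℝ) := (fun b => b + w) '' B

/-- `ϑ_e^z` assigns zero mass to every vertical line `{x} × ℝ` with `x ≥ 0`. -/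
theorem stmt_3 (α : ℝ) (hα : 0 < α) (ϑ : Measure (ℝ × ℝ)) [IsProbabilityMeasure ϑ]
    (hϑsupp : ϑ {p : ℝ × ℝ | p.1 < 0} = 0)
    (hϑ0 : ϑ {p : ℝ × ℝ | p.1 = 0} = 0)
    (hϑmean : ∫⁻ p, ENNReal.ofReal p.1 ∂ϑ = ENNReal.ofReal α⁻¹)
    (z : ℝ) (hz : 0 < z) (τ : Measure (ℝ × ℝ)) [IsFiniteMeasure τ]
    (hτsupp : τ {p : ℝ × ℝ | p.1 < 0} = 0)
    (hτ : ∀ B : Set (ℝ × ℝ), MeasurableSet B → B ⊆ Hplus →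
      τ B = ENNReal.ofReal α * ∫⁻ u in Ioi (0 : ℝ), ϑ (shiftSet B (u / z, u))) :
    ∀ x : ℝ, 0 ≤ x → τ (({x} : Set ℝ) ×ˢ (univ : Set ℝ)) = 0 := by
  intro x hx
  have hB : MeasurableSet (({x} : Set ℝ) ×ˢ (univ : Set ℝ)) :=
    (measurableSet_singleton x).prod MeasurableSet.univ
  have hsub : (({x} : Set ℝ) ×ˢ (univ : Set ℝ)) ⊆ Hplus := by
    rintro ⟨a, b⟩ ⟨ha, -⟩
    simp only [mem_singleton_iff] at ha
    simpa [Hplus, ha] using hx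
  rw [hτ _ hB hsub]
  -- the shifted set is a vertical line at x + u/z
  have hshift : ∀ u : ℝ, shiftSet (({x} : Set ℝ) ×ˢ (univ : Set ℝ)) (u / z, u)
      = {p : ℝ × ℝ | p.1 = x + u / z} := by
    intro u
    ext ⟨a, b⟩
    constructor
    · rintro ⟨⟨c, d⟩, ⟨hc, -⟩, h⟩
      simp only [mem_singleton_iff] at hc
      have h1 : c + u / z = a := congrArg Prod.fst h
      simp [← h1, hc]
    · intro h
      refine ⟨(x, b - u), ⟨rfl, trivial⟩, ?_⟩
      simp only [mem_setOf_eq] at h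
      have : (x + u / z, b - u + u) = (a, b) := by
        simp [h, sub_add_cancel]
      simpa [Prod.ext_iff] using this
  -- countably many atoms of the first marginal
  have hcount : Set.Countable {t : ℝ | 0 < ϑ {p : ℝ × ℝ | p.1 = t}} :=
    Measure.countable_meas_level_set_pos (measurable_fst)
  have hcount2 : Set.Countable ((fun t : ℝ => (t - x) * z) ''
      {t : ℝ | 0 < ϑ {p : ℝ × ℝ | p.1 = t}}) := hcount.image _
  have hae : (fun u : ℝ => ϑ (shiftSet (({x} : Set ℝ) ×ˢ (univ : Set ℝ)) (u / z, u)))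
      =ᵐ[volume.restrict (Ioi (0 : ℝ))] 0 := by
    refine ae_restrict_of_ae ?_
    have hnull : volume ((fun t : ℝ => (t - x) * z) ''
        {t : ℝ | 0 < ϑ {p : ℝ × ℝ | p.1 = t}}) = 0 := hcount2.measure_zero _
    filter_upwards [measure_eq_zero_iff_ae_notMem.mp hnull] with u hu
    rw [hshift u]
    by_contra hne
    have hpos : 0 < ϑ {p : ℝ × ℝ | p.1 = x + u / z} := by
      simpa [Pi.zero_apply, pos_iff_ne_zero] using hne
    exact hu ⟨x + u / z, hpos, by field_simp; ring⟩
  rw [lintegral_congr_ae hae]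
  simp
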